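/- arXiv:2408.11362 — 8 statements merged into one kernel-verified Lean document; each statement's English description precedes it below -/
import Mathlib

section
/- Suppose φ1 = φ2 = β ∈ (0,1) (symmetric sender population). Then Δ_O^B + Δ_S^B/2 = (p_H^B - q_H) + (p_2^B - q_2) ≥ 0 and Δ_O^B - Δ_S^B/2 = (p_H^B - q_H) + (p_1^B - q_1) ≥ 0; hence |Δ_S^B| ≤ 2Δ_O^B and all receiver types accept the recommendation. -/
/-- Symmetric sender population: Δ_O^B ± Δ_S^B/2 ≥ 0, hence |Δ_S^B| ≤ 2Δ_O^B
and all receiver types accept the recommendation. -/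
theorem stmt_8 (qH q1 q2 qL β : ℝ)
    (hqH : 0 ≤ qH) (hq1 : 0 ≤ q1) (hq2 : 0 ≤ q2) (hqL : 0 ≤ qL)
    (hsum : qH + q1 + q2 + qL = 1)
    (hβ : β ∈ Set.Ioo (0:ℝ) 1)
    (hD : 0 < qH + β * (q1 + q2)) :
    let D := qH + β * (q1 + q2)
    let pH := qH / D
    let p1 := β * q1 / D
    let p2 := β * q2 / D
    let ΔO := (pH - qH) + (p1 - q1)/2 + (p2 - q2)/2
    let ΔS := (p2 - q2) - (p1 - q1)
    0 ≤ (pH - qH) + (p2 - q2) ∧ 0 ≤ (pH - qH) + (p1 - q1) ∧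
    |ΔS| ≤ 2 * ΔO ∧
    ∀ i ∈ Set.Icc (-(1:ℝ)/2) (1/2), i * ΔS ≤ ΔO := by
  obtain ⟨hβ0, hβ1⟩ := hβ
  intro D pH p1 p2 ΔO ΔS
  have hDpos : 0 < D := hD
  have hA : 0 ≤ (pH - qH) + (p2 - q2) := by
    rw [div_sub' (ne_of_gt hDpos), div_sub' (ne_of_gt hDpos),
      ← add_div]
    apply div_nonneg _ hDpos.le
    simp only [D]
    have key : qH - (qH + β * (q1 + q2)) * qH + (β * q2 - (qH + β * (q1 + q2)) * q2)
        = qH * (1 - β) * q1 + qH * qL + β * q2 * qL := by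
      linear_combination (-(qH + β * q2)) * hsum
    rw [key]
    have := mul_nonneg (mul_nonneg hqH (sub_nonneg.2 hβ1.le)) hq1
    have := mul_nonneg hqH hqL
    have := mul_nonneg (mul_nonneg hβ0.le hq2) hqL
    linarith
  have hB : 0 ≤ (pH - qH) + (p1 - q1) := by
    rw [div_sub' (ne_of_gt hDpos), div_sub' (ne_of_gt hDpos),
      ← add_div]
    apply div_nonneg _ hDpos.le
    simp only [D]
    have key : qH - (qH + β * (q1 + q2)) * qH + (β * q1 - (qH + β * (q1 + q2)) * q1)
        = qH * (1 - β) * q2 + qH * qL + β * q1 * qL := by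
      linear_combination (-(qH + β * q1)) * hsum
    rw [key]
    have := mul_nonneg (mul_nonneg hqH (sub_nonneg.2 hβ1.le)) hq2
    have := mul_nonneg hqH hqL
    have := mul_nonneg (mul_nonneg hβ0.le hq1) hqL
    linarith
  have hsumAB : (pH - qH) + (p2 - q2) + ((pH - qH) + (p1 - q1)) = 2 * ΔO := by
    simp only [ΔO]; ring
  have habs : |ΔS| ≤ 2 * ΔO := by
    rw [abs_le]
    constructor <;> simp only [ΔS] <;> linarith
  refine ⟨hA, hB, habs, fun i hi => ?_⟩
  obtain ⟨hi1, hi2⟩ := hi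
  calc i * ΔS ≤ |i * ΔS| := le_abs_self _
    _ = |i| * |ΔS| := abs_mul _ _
    _ ≤ (1/2) * (2 * ΔO) := by
        apply mul_le_mul _ habs (abs_nonneg _) (by norm_num)
        rw [abs_le]; constructor <;> linarith
    _ = ΔO := by ring
end

section
/- Under the symmetric parameterization, the value of the recommendation system satisfies V(β) = π^B · Δ_O^B = (1-2Q)·(σ + Q(β - σ + σ²(1-β)))/(σ+1)², where π^B = (1-2Q)σ/(1+σ) + 2Qβ and Δ_O^B = (βQ(σ+1) - 2Qσ + σ)/(2βQ(σ+1) - 2Qσ + σ) - (1-2Q)σ/(1+σ) - Q. -/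
/-- Value of the recommendation system under the symmetric parameterization:
V(β) = π^B · Δ_O^B = (1-2Q)(σ + Q(β - σ + σ²(1-β)))/(σ+1)². -/
theorem stmt_9 (Q σ β : ℝ)
    (hQ : Q ∈ Set.Ioo (0:ℝ) (1/2)) (hσ : 0 < σ) (hβ : β ∈ Set.Ioo (0:ℝ) 1) :
    ((1 - 2*Q) * σ / (1 + σ) + 2*Q*β) *
      ((β*Q*(σ+1) - 2*Q*σ + σ) / (2*β*Q*(σ+1) - 2*Q*σ + σ)
        - (1 - 2*Q) * σ / (1 + σ) - Q)
    = (1 - 2*Q) * (σ + Q*(β - σ + σ^2*(1 - β))) / (σ + 1)^2 := by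
  obtain ⟨hQ0, hQ1⟩ := hQ
  obtain ⟨hβ0, hβ1⟩ := hβ
  have h1 : (1 + σ) ≠ 0 := by linarith
  have h2 : 2*β*Q*(σ+1) - 2*Q*σ + σ ≠ 0 := by nlinarith [mul_pos (mul_pos hβ0 hQ0) hσ, mul_pos hβ0 hQ0, mul_pos hQ0 hσ]
  rw [div_sub_div _ _ h2 h1, div_sub' (by positivity), div_add' _ _ _ h1, div_mul_div_comm, div_eq_div_iff (by positivity) (by positivity)]
  ring
end

section
/- Under the symmetric parameterization, π^B = (1-2Q)σ/(1+σ) + 2Qβ is strictly increasing in β, and Δ_O^B = (βQ(σ+1) - 2Qσ + σ)/(2βQ(σ+1) - 2Qσ + σ) - (1-2Q)σ/(1+σ) - Q is strictly decreasing in β, with dΔ_O^B/dβ = -Q(1-2Q)σ(1+σ)/(σ - 2Qσ + 2βQ(1+σ))². -/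
/-- π^B is strictly increasing and Δ_O^B strictly decreasing in β, with the
stated derivative of Δ_O^B. -/
theorem stmt_10 (Q σ : ℝ) (hQ : Q ∈ Set.Ioo (0:ℝ) (1/2)) (hσ : 0 < σ) :
    StrictMonoOn (fun β : ℝ => (1 - 2*Q) * σ / (1 + σ) + 2*Q*β) (Set.Ioo (0:ℝ) 1) ∧
    StrictAntiOn (fun β : ℝ => (β*Q*(σ+1) - 2*Q*σ + σ) / (2*β*Q*(σ+1) - 2*Q*σ + σ)
        - (1 - 2*Q) * σ / (1 + σ) - Q) (Set.Ioo (0:ℝ) 1) ∧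
    ∀ β ∈ Set.Ioo (0:ℝ) 1,
      HasDerivAt (fun β : ℝ => (β*Q*(σ+1) - 2*Q*σ + σ) / (2*β*Q*(σ+1) - 2*Q*σ + σ)
          - (1 - 2*Q) * σ / (1 + σ) - Q)
        (-(Q * (1 - 2*Q) * σ * (1 + σ)) / (σ - 2*Q*σ + 2*β*Q*(1 + σ))^2) β := by
  obtain ⟨hQ0, hQ2⟩ := hQ
  have hderiv : ∀ β ∈ Set.Ioo (0:ℝ) 1,
      HasDerivAt (fun β : ℝ => (β*Q*(σ+1) - 2*Q*σ + σ) / (2*β*Q*(σ+1) - 2*Q*σ + σ)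
          - (1 - 2*Q) * σ / (1 + σ) - Q)
        (-(Q * (1 - 2*Q) * σ * (1 + σ)) / (σ - 2*Q*σ + 2*β*Q*(1 + σ))^2) β := by
    intro β hβ
    obtain ⟨hβ0, hβ1⟩ := hβ
    have hDpos : 0 < 2*β*Q*(σ+1) - 2*Q*σ + σ := by
      nlinarith [mul_pos (mul_pos hβ0 hQ0) (by linarith : (0:ℝ) < σ+1),
        mul_pos hσ (by linarith : (0:ℝ) < 1 - 2*Q)]
    have hD0 : (2*β*Q*(σ+1) - 2*Q*σ + σ) ≠ 0 := ne_of_gt hDpos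
    have hN : HasDerivAt (fun b : ℝ => b*Q*(σ+1) - 2*Q*σ + σ) (Q*(σ+1)) β := by
      have := (((hasDerivAt_id β).mul_const Q).mul_const (σ+1)).sub_const (2*Q*σ)
        |>.add_const σ
      simpa using this
    have hD : HasDerivAt (fun b : ℝ => 2*b*Q*(σ+1) - 2*Q*σ + σ) (2*Q*(σ+1)) β := by
      have := ((((hasDerivAt_id β).const_mul 2).mul_const Q).mul_const (σ+1)).sub_const
        (2*Q*σ) |>.add_const σ
      have h2 : 2 * 1 * Q * (σ+1) = 2*Q*(σ+1) := by ring
      simpa [h2] using this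
    have hq := (hN.div hD hD0).sub_const ((1 - 2*Q) * σ / (1 + σ)) |>.sub_const Q
    refine hq.congr_deriv ?_
    have h2 : (σ - 2*Q*σ + 2*β*Q*(1 + σ))^2 = (2*β*Q*(σ+1) - 2*Q*σ + σ)^2 := by ring
    rw [h2, div_eq_div_iff (pow_ne_zero 2 hD0) (pow_ne_zero 2 hD0)]
    ring
  refine ⟨?_, ?_, hderiv⟩
  · intro a _ b _ hab
    simp only
    nlinarith
  · have hconv : Convex ℝ (Set.Ioo (0:ℝ) 1) := convex_Ioo 0 1
    refine strictAntiOn_of_deriv_neg hconv ?_ ?_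
    · exact fun x hx => ((hderiv x hx).differentiableAt).continuousAt.continuousWithinAt
    · intro x hx
      rw [interior_Ioo] at hx
      rw [(hderiv x hx).deriv]
      obtain ⟨hx0, hx1⟩ := hx
      apply div_neg_of_neg_of_pos
      · nlinarith [mul_pos (mul_pos (mul_pos hQ0 (by linarith : (0:ℝ) < 1 - 2*Q)) hσ)
          (by linarith : (0:ℝ) < 1 + σ)]
      · have : 0 < σ - 2*Q*σ + 2*x*Q*(1+σ) := by
          nlinarith [mul_pos (mul_pos hx0 hQ0) (by linarith : (0:ℝ) < 1+σ),
            mul_pos hσ (by linarith : (0:ℝ) < 1 - 2*Q)]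
        positivity
end

section
/- Fix β ∈ [0,1] and σ > 0, and view V(Q) = (1-2Q)·(σ + Q(β - σ + σ²(1-β)))/(σ+1)² as a function of Q ∈ (0, 1/2). If 3σ - β - σ² + σ²β > 0 then V is strictly decreasing in Q on (0,1/2); in particular this holds when σ = 1. If 3σ - β - σ² + σ²β < 0 then Q* = (3σ - β - σ² + σ²β)/(4σ - 4β - 4σ² + 4σ²β) lies in (0, 1/2) and maximizes V over (0,1/2). -/
/-- Effect of the prevalence Q of controversial products on the value V(Q). -/
theorem stmt_12 (β σ : ℝ) (hβ : β ∈ Set.Icc (0:ℝ) 1) (hσ : 0 < σ) :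
    let V := fun Q : ℝ => (1 - 2*Q) * (σ + Q*(β - σ + σ^2*(1 - β))) / (σ + 1)^2
    (σ = 1 → 0 < 3*σ - β - σ^2 + σ^2*β) ∧
    (0 < 3*σ - β - σ^2 + σ^2*β → StrictAntiOn V (Set.Ioo (0:ℝ) (1/2))) ∧
    (3*σ - β - σ^2 + σ^2*β < 0 →
      (3*σ - β - σ^2 + σ^2*β) / (4*σ - 4*β - 4*σ^2 + 4*σ^2*β) ∈ Set.Ioo (0:ℝ) (1/2) ∧
      ∀ Q ∈ Set.Ioo (0:ℝ) (1/2),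
        V Q ≤ V ((3*σ - β - σ^2 + σ^2*β) / (4*σ - 4*β - 4*σ^2 + 4*σ^2*β))) := by
  intro V
  obtain ⟨hβ0, hβ1⟩ := hβ
  set c : ℝ := β - σ + σ^2*(1 - β) with hc
  have hs : (0:ℝ) < (σ+1)^2 := by positivity
  have h2c : 0 < 2*σ + c := by
    have : 0 ≤ σ^2*(1-β) := by nlinarith [sq_nonneg σ]
    nlinarith
  refine ⟨?_, ?_, ?_⟩
  · intro h; subst h; nlinarith
  · intro hD x hx y hy hxy
    obtain ⟨hx0, hx1⟩ := hx
    obtain ⟨hy0, hy1⟩ := hy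
    have hDc : 3*σ - β - σ^2 + σ^2*β = 2*σ - c := by rw [hc]; ring
    rw [hDc] at hD
    have hkey : 0 < 2*σ - c + 2*c*(x+y) := by
      rcases le_or_gt 0 c with h | h
      · nlinarith
      · nlinarith
    show (1 - 2*y) * (σ + y*c) / (σ + 1)^2 < (1 - 2*x) * (σ + x*c) / (σ + 1)^2
    rw [div_lt_div_iff₀ hs hs]
    nlinarith [mul_pos (mul_pos (sub_pos.2 hxy) hkey) hs]
  · intro hD
    have hcpos : 0 < c := by nlinarith
    set q : ℝ := (3*σ - β - σ^2 + σ^2*β) / (4*σ - 4*β - 4*σ^2 + 4*σ^2*β) with hq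
    have hden : (4*σ - 4*β - 4*σ^2 + 4*σ^2*β) = -4*c := by rw [hc]; ring
    have hqv : q = (c - 2*σ) / (4*c) := by
      rw [hq, hden]
      rw [div_eq_div_iff (by nlinarith) (by nlinarith)]
      ring
    have hDc : 3*σ - β - σ^2 + σ^2*β = 2*σ - c := by rw [hc]; ring
    have hq0 : 0 < q := by
      rw [hqv]
      apply div_pos (by nlinarith) (by nlinarith)
    have hq1 : q < 1/2 := by
      rw [hqv, div_lt_iff₀ (by nlinarith)]
      nlinarith
    refine ⟨⟨hq0, hq1⟩, ?_⟩
    intro x hx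
    show (1 - 2*x) * (σ + x*c) / (σ + 1)^2 ≤ (1 - 2*q) * (σ + q*c) / (σ + 1)^2
    rw [div_le_div_iff₀ hs hs]
    have hkey : (1 - 2*q) * (σ + q*c) - (1 - 2*x) * (σ + x*c) = 2*c*(x - q)^2 := by
      rw [hqv]
      field_simp
      ring
    nlinarith [sq_nonneg (x - q), mul_nonneg hcpos.le (sq_nonneg (x - q))]
end

section
/- Under Assumption q_1 = q_2 = Q, q_H > 0, and type distribution F(i) = (i+1/2)^a with a > 0, the subjective effect of a buy recommendation with threshold R ∈ (0,1) equals Δ_S^B = -Q(1 - R^a - (1-R)^a)/(q_H + Q(1 - R^a + (1-R)^a)), and Δ_S^B = 0 if a = 1, Δ_S^B < 0 if a > 1, and Δ_S^B > 0 if a < 1. -/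
/-- Under F(i) = (i+1/2)^a and q1 = q2 = Q, the subjective effect of a buy
recommendation with threshold R equals the stated formula, with the stated signs. -/
theorem stmt_13 (a R Q qH : ℝ)
    (ha : 0 < a) (hR : R ∈ Set.Ioo (0:ℝ) 1) (hQ : 0 < Q) (hqH : 0 < qH) :
    let φ1 := 1 - R ^ a
    let φ2 := (1 - R) ^ a
    let D := qH + Q * (φ1 + φ2)
    let p1 := Q * φ1 / D
    let p2 := Q * φ2 / D
    let ΔS := (p2 - Q) - (p1 - Q)
    ΔS = -(Q * (1 - R ^ a - (1 - R) ^ a)) / (qH + Q * (1 - R ^ a + (1 - R) ^ a)) ∧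
    (a = 1 → ΔS = 0) ∧ (1 < a → ΔS < 0) ∧ (a < 1 → 0 < ΔS) := by
  obtain ⟨hR0, hR1⟩ := hR
  have h1R0 : (0:ℝ) < 1 - R := by linarith
  have h1R1 : 1 - R < 1 := by linarith
  have hRa : R ^ a < 1 := Real.rpow_lt_one hR0.le hR1 ha
  have hRa0 : 0 < R ^ a := Real.rpow_pos_of_pos hR0 a
  have h1Ra : (1 - R) ^ a < 1 := Real.rpow_lt_one h1R0.le h1R1 ha
  have h1Ra0 : 0 < (1 - R) ^ a := Real.rpow_pos_of_pos h1R0 a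
  intro φ1 φ2 D p1 p2 ΔS
  have hD : 0 < D := by
    have : 0 < φ1 + φ2 := by simp only [φ1, φ2]; linarith
    have := mul_pos hQ this
    simp only [D]; linarith
  have hform : ΔS = -(Q * (1 - R ^ a - (1 - R) ^ a)) / D := by
    simp only [ΔS, p1, p2, φ1, φ2, D]
    field_simp
    ring
  refine ⟨hform, ?_, ?_, ?_⟩
  · intro ha1
    rw [hform]
    simp [ha1, Real.rpow_one]
  · intro ha1
    rw [hform]
    have hr : R ^ a < R := by
      calc R ^ a < R ^ (1:ℝ) := Real.rpow_lt_rpow_of_exponent_gt hR0 hR1 ha1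
      _ = R := Real.rpow_one R
    have hs : (1 - R) ^ a < 1 - R := by
      calc (1-R) ^ a < (1-R) ^ (1:ℝ) := Real.rpow_lt_rpow_of_exponent_gt h1R0 h1R1 ha1
      _ = 1 - R := Real.rpow_one _
    have : 0 < Q * (1 - R ^ a - (1 - R) ^ a) := mul_pos hQ (by linarith)
    exact div_neg_of_neg_of_pos (by linarith) hD
  · intro ha1
    rw [hform]
    have hr : R < R ^ a := by
      calc R = R ^ (1:ℝ) := (Real.rpow_one R).symm
      _ < R ^ a := Real.rpow_lt_rpow_of_exponent_gt hR0 hR1 ha1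
    have hs : 1 - R < (1 - R) ^ a := by
      calc 1 - R = (1-R) ^ (1:ℝ) := (Real.rpow_one _).symm
      _ < (1-R) ^ a := Real.rpow_lt_rpow_of_exponent_gt h1R0 h1R1 ha1
    have : Q * (1 - R ^ a - (1 - R) ^ a) < 0 :=
      mul_neg_of_pos_of_neg hQ (by linarith)
    exact div_pos (by linarith) hD
end

section
/- Let V(R) = c_0 + (Q/(a+1))·[c_1·(1 - R^a) + c_2·(1-R)^a] with a > 0, Q > 0, c_1 = a + (a+1)·(Q(σ-1) - σ)/(σ+1), c_2 = 1 + (a+1)·(Q(σ-1) - σ)/(σ+1), and σ > 0. Then V is quasiconcave on (0,1): its derivative V'(R) = -(Qa/(a+1))·[R^{a-1}·c_1 + (1-R)^{a-1}·c_2] satisfies: if V'(R_0) < 0 for some R_0 ∈ (0,1) then V'(R) < 0 for all R ∈ (R_0, 1) whenever c_1 and c_2 have opposite signs ordered consistently with a ≷ 1, and V is monotone when c_1, c_2 have the same sign. -/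
/-- Quasiconcavity of V(R) = c0 + (Q/(a+1))(c1(1-R^a) + c2(1-R)^a): once the
derivative turns negative it stays negative in the sign-mixed cases, and V is
monotone when c1, c2 have the same sign. -/
theorem stmt_15 (a Q σ : ℝ) (ha : 0 < a) (hQ : 0 < Q) (hσ : 0 < σ) :
    let c0 := (1 - 2*Q) * σ * (Q*(σ - 1) + 1) / (σ + 1)^2
    let c1 := a + (a + 1) * (Q*(σ - 1) - σ) / (σ + 1)
    let c2 := 1 + (a + 1) * (Q*(σ - 1) - σ) / (σ + 1)
    let V := fun R : ℝ => c0 + (Q / (a + 1)) * (c1 * (1 - R ^ a) + c2 * (1 - R) ^ a)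
    let V' := fun R : ℝ => -(Q * a / (a + 1)) * (R ^ (a - 1) * c1 + (1 - R) ^ (a - 1) * c2)
    (∀ R ∈ Set.Ioo (0:ℝ) 1, HasDerivAt V (V' R) R) ∧
    (1 ≤ a → 0 < c1 → c2 < 0 →
      ∀ R0 ∈ Set.Ioo (0:ℝ) 1, V' R0 < 0 → ∀ R ∈ Set.Ioo R0 1, V' R < 0) ∧
    (a ≤ 1 → c1 < 0 → 0 < c2 →
      ∀ R0 ∈ Set.Ioo (0:ℝ) 1, V' R0 < 0 → ∀ R ∈ Set.Ioo R0 1, V' R < 0) ∧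
    (0 ≤ c1 → 0 ≤ c2 → AntitoneOn V (Set.Ioo (0:ℝ) 1)) ∧
    (c1 ≤ 0 → c2 ≤ 0 → MonotoneOn V (Set.Ioo (0:ℝ) 1)) := by
  intro c0 c1 c2 V V'
  have hK : 0 < Q * a / (a + 1) := by positivity
  -- derivative claim
  have hderiv : ∀ R ∈ Set.Ioo (0:ℝ) 1, HasDerivAt V (V' R) R := by
    intro R hR
    obtain ⟨hR0, hR1⟩ := hR
    have h1 : HasDerivAt (fun R : ℝ => R ^ a) (a * R ^ (a - 1)) R :=
      Real.hasDerivAt_rpow_const (Or.inl hR0.ne')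
    have h2 : HasDerivAt (fun R : ℝ => (1 - R) ^ a)
        (a * (1 - R) ^ (a - 1) * (-1)) R := by
      have hsub : HasDerivAt (fun R : ℝ => 1 - R) (-1) R := by
        exact (hasDerivAt_id' R).const_sub 1
      exact (Real.hasDerivAt_rpow_const (Or.inl (by linarith : (1:ℝ) - R ≠ 0))).comp R hsub
    have h3 : HasDerivAt V
        ((Q / (a + 1)) * (c1 * (-(a * R ^ (a - 1))) + c2 * (a * (1 - R) ^ (a - 1) * (-1)))) R := by
      have := (((hasDerivAt_const R (1:ℝ)).sub h1).const_mul c1).add (h2.const_mul c2)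
      exact ((this.const_mul (Q / (a + 1))).const_add c0).congr_deriv (by ring)
    convert h3 using 1
    show -(Q * a / (a + 1)) * (R ^ (a - 1) * c1 + (1 - R) ^ (a - 1) * c2) = _
    ring
  refine ⟨hderiv, ?_, ?_, ?_, ?_⟩
  · -- 1 ≤ a, c1 > 0, c2 < 0
    intro ha1 hc1 hc2 R0 hR0 hV0 R hR
    obtain ⟨hR00, hR01⟩ := hR0
    obtain ⟨hRl, hRu⟩ := hR
    have hg0 : 0 < R0 ^ (a - 1) * c1 + (1 - R0) ^ (a - 1) * c2 := by
      by_contra h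
      push_neg at h
      have := mul_nonneg hK.le (neg_nonneg.mpr h)
      simp only [V'] at hV0
      nlinarith
    have h1 : R0 ^ (a - 1) ≤ R ^ (a - 1) :=
      Real.rpow_le_rpow hR00.le hRl.le (by linarith)
    have h2 : (1 - R) ^ (a - 1) ≤ (1 - R0) ^ (a - 1) :=
      Real.rpow_le_rpow (by linarith) (by linarith) (by linarith)
    have hg : 0 < R ^ (a - 1) * c1 + (1 - R) ^ (a - 1) * c2 := by
      have e1 : R0 ^ (a - 1) * c1 ≤ R ^ (a - 1) * c1 :=
        mul_le_mul_of_nonneg_right h1 hc1.le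
      have e2 : (1 - R0) ^ (a - 1) * c2 ≤ (1 - R) ^ (a - 1) * c2 :=
        mul_le_mul_of_nonpos_right h2 hc2.le
      linarith
    exact mul_neg_of_neg_of_pos (neg_lt_zero.mpr hK) hg
  · -- a ≤ 1, c1 < 0, c2 > 0
    intro ha1 hc1 hc2 R0 hR0 hV0 R hR
    obtain ⟨hR00, hR01⟩ := hR0
    obtain ⟨hRl, hRu⟩ := hR
    have hg0 : 0 < R0 ^ (a - 1) * c1 + (1 - R0) ^ (a - 1) * c2 := by
      by_contra h
      push_neg at h
      have := mul_nonneg hK.le (neg_nonneg.mpr h)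
      simp only [V'] at hV0
      nlinarith
    have h1 : R ^ (a - 1) ≤ R0 ^ (a - 1) :=
      Real.rpow_le_rpow_of_nonpos hR00 hRl.le (by linarith)
    have h2 : (1 - R0) ^ (a - 1) ≤ (1 - R) ^ (a - 1) :=
      Real.rpow_le_rpow_of_nonpos (by linarith) (by linarith) (by linarith)
    have hg : 0 < R ^ (a - 1) * c1 + (1 - R) ^ (a - 1) * c2 := by
      have e1 : R0 ^ (a - 1) * c1 ≤ R ^ (a - 1) * c1 :=
        mul_le_mul_of_nonpos_right h1 hc1.le
      have e2 : (1 - R0) ^ (a - 1) * c2 ≤ (1 - R) ^ (a - 1) * c2 :=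
        mul_le_mul_of_nonneg_right h2 hc2.le
      linarith
    exact mul_neg_of_neg_of_pos (neg_lt_zero.mpr hK) hg
  · -- c1, c2 ≥ 0 : antitone
    intro hc1 hc2
    have hconv : Convex ℝ (Set.Ioo (0:ℝ) 1) := convex_Ioo 0 1
    have hint : interior (Set.Ioo (0:ℝ) 1) = Set.Ioo (0:ℝ) 1 :=
      interior_Ioo
    refine antitoneOn_of_deriv_nonpos hconv ?_ ?_ ?_
    · intro x hx
      exact ((hderiv x hx).continuousAt).continuousWithinAt
    · intro x hx
      rw [hint] at hx
      exact (hderiv x hx).differentiableAt.differentiableWithinAt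
    · intro x hx
      rw [hint] at hx
      rw [(hderiv x hx).deriv]
      obtain ⟨hx0, hx1⟩ := hx
      have h1 : (0:ℝ) ≤ x ^ (a - 1) := Real.rpow_nonneg hx0.le _
      have h2 : (0:ℝ) ≤ (1 - x) ^ (a - 1) := Real.rpow_nonneg (by linarith) _
      show -(Q * a / (a + 1)) * _ ≤ 0
      have : 0 ≤ x ^ (a - 1) * c1 + (1 - x) ^ (a - 1) * c2 := by
        have := mul_nonneg h1 hc1
        have := mul_nonneg h2 hc2
        linarith
      exact mul_nonpos_of_nonpos_of_nonneg (neg_nonpos.mpr hK.le) this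
  · -- c1, c2 ≤ 0 : monotone
    intro hc1 hc2
    have hconv : Convex ℝ (Set.Ioo (0:ℝ) 1) := convex_Ioo 0 1
    have hint : interior (Set.Ioo (0:ℝ) 1) = Set.Ioo (0:ℝ) 1 :=
      interior_Ioo
    refine monotoneOn_of_deriv_nonneg hconv ?_ ?_ ?_
    · intro x hx
      exact ((hderiv x hx).continuousAt).continuousWithinAt
    · intro x hx
      rw [hint] at hx
      exact (hderiv x hx).differentiableAt.differentiableWithinAt
    · intro x hx
      rw [hint] at hx
      rw [(hderiv x hx).deriv]
      obtain ⟨hx0, hx1⟩ := hx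
      have h1 : (0:ℝ) ≤ x ^ (a - 1) := Real.rpow_nonneg hx0.le _
      have h2 : (0:ℝ) ≤ (1 - x) ^ (a - 1) := Real.rpow_nonneg (by linarith) _
      show 0 ≤ -(Q * a / (a + 1)) * _
      have : x ^ (a - 1) * c1 + (1 - x) ^ (a - 1) * c2 ≤ 0 := by
        have := mul_nonpos_of_nonneg_of_nonpos h1 hc1
        have := mul_nonpos_of_nonneg_of_nonpos h2 hc2
        linarith
      nlinarith [mul_nonneg hK.le (neg_nonneg.mpr this)]
end

section
/- Consider the limits lim_{R→0} V'(R) and lim_{R→1} V'(R) for V(R) as in the asymmetric model with a < 1. Then lim_{R→0} V'(R) > 0 if and only if (a+1)(Q + (1-2Q)σ/(1+σ)) > a, and lim_{R→1} V'(R) < 0 if and only if (a+1)(Q + (1-2Q)σ/(1+σ)) < 1. Consequently, if 1/(a+1) > Q + (1-2Q)σ/(1+σ) > a/(a+1), then V attains an interior maximum on (0,1). -/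
open Filter Real Set

private lemma aux_add_atTop {l : Filter ℝ} {f g : ℝ → ℝ} {c : ℝ}
    (hf : Tendsto f l atTop) (hg : Tendsto g l (nhds c)) :
    Tendsto (fun x => f x + g x) l atTop := by
  refine tendsto_atTop_mono' l ?_ (tendsto_atTop_add_const_right l (c - 1) hf)
  filter_upwards [hg.eventually (eventually_gt_nhds (by linarith : c - 1 < c))] with x hx
  linarith

private lemma aux_add_atBot {l : Filter ℝ} {f g : ℝ → ℝ} {c : ℝ}
    (hf : Tendsto f l atBot) (hg : Tendsto g l (nhds c)) :
    Tendsto (fun x => f x + g x) l atBot := by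
  refine tendsto_atBot_mono' l ?_ (tendsto_atBot_add_const_right l (c + 1) hf)
  filter_upwards [hg.eventually (eventually_lt_nhds (by linarith : c < c + 1))] with x hx
  linarith

private lemma aux_rpow_zero (a : ℝ) (ha0 : 0 < a) (ha1 : a < 1) :
    Tendsto (fun R : ℝ => R ^ (a - 1)) (nhdsWithin 0 (Set.Ioi 0)) atTop := by
  have h1 : Tendsto (fun R : ℝ => (R⁻¹) ^ (1 - a)) (nhdsWithin 0 (Set.Ioi 0)) atTop :=
    (tendsto_rpow_atTop (by linarith)).comp tendsto_inv_nhdsGT_zero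
  refine h1.congr' ?_
  filter_upwards [self_mem_nhdsWithin] with x hx
  rw [Real.inv_rpow (le_of_lt hx), ← Real.rpow_neg (le_of_lt hx), neg_sub]

/-- Boundary behavior of V'(R) in the asymmetric model with a < 1, and the
resulting interior maximum. -/
theorem stmt_16 (a Q σ : ℝ)
    (ha : a ∈ Set.Ioo (0:ℝ) 1) (hQ : Q ∈ Set.Ioo (0:ℝ) (1/2)) (hσ : 0 < σ) :
    let h := (1 - 2*Q) * σ / (1 + σ)
    let V := fun R : ℝ => h + (a*Q*(1 - R ^ a) + Q*(1 - R) ^ a) / (a + 1)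
      - (h + Q*(1 - R ^ a) + Q*(1 - R) ^ a) * (h + Q)
    let V' := fun R : ℝ =>
      (a * Q * ((a + 1) * (R ^ (a - 1) + (1 - R) ^ (a - 1)) * (Q + h)
        - a * R ^ (a - 1) - (1 - R) ^ (a - 1))) / (a + 1)
    (∀ R ∈ Set.Ioo (0:ℝ) 1, HasDerivAt V (V' R) R) ∧
    (Filter.Tendsto V' (nhdsWithin 0 (Set.Ioo (0:ℝ) 1)) Filter.atTop ↔
      a < (a + 1) * (Q + h)) ∧
    (Filter.Tendsto V' (nhdsWithin 1 (Set.Ioo (0:ℝ) 1)) Filter.atBot ↔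
      (a + 1) * (Q + h) < 1) ∧
    (a / (a + 1) < Q + h ∧ Q + h < 1 / (a + 1) →
      ∃ Rs ∈ Set.Ioo (0:ℝ) 1, ∀ R ∈ Set.Ioo (0:ℝ) 1, V R ≤ V Rs) := by
  obtain ⟨ha0, ha1⟩ := ha
  obtain ⟨hQ0, hQ2⟩ := hQ
  intro h V V'
  have ha1' : (0:ℝ) < a + 1 := by linarith
  have hane : a + 1 ≠ 0 := ne_of_gt ha1'
  set c1 : ℝ := (a + 1) * (Q + h) - a with hc1def
  set c2 : ℝ := (a + 1) * (Q + h) - 1 with hc2def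
  set k : ℝ := a * Q / (a + 1) with hkdef
  have hk : 0 < k := by positivity
  have hc12 : c2 = c1 - (1 - a) := by rw [hc1def, hc2def]; ring
  -- rewriting of V'
  have hV'eq : ∀ R : ℝ, V' R = k * (c1 * R ^ (a-1) + c2 * (1 - R) ^ (a-1)) := by
    intro R
    show (a * Q * ((a + 1) * (R ^ (a - 1) + (1 - R) ^ (a - 1)) * (Q + h)
        - a * R ^ (a - 1) - (1 - R) ^ (a - 1))) / (a + 1)
      = k * (c1 * R ^ (a-1) + c2 * (1 - R) ^ (a-1))
    rw [hkdef, hc1def, hc2def]; ring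
  -- Part 1: the derivative
  have hderiv : ∀ R ∈ Set.Ioo (0:ℝ) 1, HasDerivAt V (V' R) R := by
    intro R hR
    have hR0 : R ≠ 0 := ne_of_gt hR.1
    have hR1 : (1:ℝ) - R ≠ 0 := by have := hR.2; intro h'; linarith [h']
    have d1 : HasDerivAt (fun x : ℝ => x ^ a) (a * R ^ (a-1)) R :=
      Real.hasDerivAt_rpow_const (Or.inl hR0)
    have hlin : HasDerivAt (fun x : ℝ => 1 - x) (-1) R := (hasDerivAt_id R).const_sub 1
    have d2 : HasDerivAt (fun x : ℝ => (1 - x) ^ a) (a * (1-R) ^ (a-1) * (-1)) R :=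
      (Real.hasDerivAt_rpow_const (x := 1 - R) (p := a) (Or.inl hR1)).comp R hlin
    have hA : HasDerivAt (fun x : ℝ => 1 - x ^ a) (-(a * R ^ (a-1))) R := d1.const_sub 1
    have hC := ((((hA.const_mul (a*Q)).add (d2.const_mul Q)).div_const (a+1)).const_add h)
    have hD := ((((hA.const_mul Q).const_add h).add (d2.const_mul Q)).mul_const (h+Q))
    have hfinal := hC.sub hD
    have heq : (a*Q * -(a * R ^ (a-1)) + Q * (a * (1-R) ^ (a-1) * (-1))) / (a+1)
        - (Q * -(a * R ^ (a-1)) + Q * (a * (1-R) ^ (a-1) * (-1))) * (h+Q) = V' R := by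
      rw [hV'eq R, hkdef, hc1def, hc2def]
      field_simp
      ring
    exact heq ▸ hfinal
  -- filters
  have hfil0 : nhdsWithin (0:ℝ) (Set.Ioo 0 1) = nhdsWithin 0 (Set.Ioi 0) :=
    nhdsWithin_Ioo_eq_nhdsGT one_pos
  have hfil1 : nhdsWithin (1:ℝ) (Set.Ioo 0 1) = nhdsWithin 1 (Set.Iio 1) :=
    nhdsWithin_Ioo_eq_nhdsLT one_pos
  have hne0 : (nhdsWithin (0:ℝ) (Set.Ioo 0 1)).NeBot := by rw [hfil0]; infer_instance
  have hne1 : (nhdsWithin (1:ℝ) (Set.Ioo 0 1)).NeBot := by rw [hfil1]; infer_instance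
  -- limits of the two power functions at 0 and 1
  have hf0 : Tendsto (fun R : ℝ => R ^ (a-1)) (nhdsWithin 0 (Set.Ioo 0 1)) atTop := by
    rw [hfil0]; exact aux_rpow_zero a ha0 ha1
  have hg0 : Tendsto (fun R : ℝ => (1 - R) ^ (a-1)) (nhdsWithin 0 (Set.Ioo 0 1)) (nhds 1) := by
    have hc : ContinuousAt (fun R : ℝ => (1 - R) ^ (a-1)) 0 := by
      exact (Real.continuousAt_rpow_const (1 - 0) (a-1) (Or.inl (by norm_num))).comp
        ((continuous_const.sub continuous_id).continuousAt)
    have := (hc.continuousWithinAt (s := Set.Ioo (0:ℝ) 1)).tendsto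
    simpa using this
  have hgmap : Tendsto (fun R : ℝ => 1 - R) (nhdsWithin (1:ℝ) (Set.Iio 1))
      (nhdsWithin (0:ℝ) (Set.Ioi 0)) := by
    apply tendsto_nhdsWithin_of_tendsto_nhds_of_eventually_within
    · have h1 : Tendsto (fun R : ℝ => 1 - R) (nhds (1:ℝ)) (nhds (1 - 1)) :=
        (continuous_const.sub continuous_id).tendsto 1
      simpa using h1.mono_left nhdsWithin_le_nhds
    · filter_upwards [self_mem_nhdsWithin] with R hR
      simp only [Set.mem_Iio] at hR
      exact Set.mem_Ioi.2 (by linarith)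
  have hg1 : Tendsto (fun R : ℝ => (1 - R) ^ (a-1)) (nhdsWithin 1 (Set.Ioo (0:ℝ) 1)) atTop := by
    rw [hfil1]; exact (aux_rpow_zero a ha0 ha1).comp hgmap
  have hf1 : Tendsto (fun R : ℝ => R ^ (a-1)) (nhdsWithin 1 (Set.Ioo (0:ℝ) 1)) (nhds 1) := by
    have hc : ContinuousAt (fun R : ℝ => R ^ (a-1)) 1 :=
      Real.continuousAt_rpow_const 1 (a-1) (Or.inl one_ne_zero)
    have := (hc.continuousWithinAt (s := Set.Ioo (0:ℝ) 1)).tendsto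
    simpa using this
  -- positivity of the powers on Ioo 0 1
  have hpos : ∀ R ∈ Set.Ioo (0:ℝ) 1, 0 < R ^ (a-1) ∧ 0 < (1 - R) ^ (a-1) := by
    intro R hR
    exact ⟨Real.rpow_pos_of_pos hR.1 _,
      Real.rpow_pos_of_pos (by linarith [hR.2] : (0:ℝ) < 1 - R) _⟩
  -- Part 2
  have part2 : Tendsto V' (nhdsWithin 0 (Set.Ioo (0:ℝ) 1)) atTop ↔ a < (a + 1) * (Q + h) := by
    constructor
    · intro hT
      by_contra hcon
      push_neg at hcon
      have hc1le : c1 ≤ 0 := by rw [hc1def]; linarith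
      have hc2lt : c2 < 0 := by rw [hc12]; linarith
      have hEv : ∀ᶠ R in nhdsWithin (0:ℝ) (Set.Ioo 0 1), V' R ≤ 0 := by
        filter_upwards [self_mem_nhdsWithin] with R hR
        obtain ⟨p1, p2⟩ := hpos R hR
        rw [hV'eq R]
        have t1 : c1 * R ^ (a-1) ≤ 0 := mul_nonpos_of_nonpos_of_nonneg hc1le p1.le
        have t2 : c2 * (1 - R) ^ (a-1) ≤ 0 := mul_nonpos_of_nonpos_of_nonneg hc2lt.le p2.le
        have : c1 * R ^ (a-1) + c2 * (1 - R) ^ (a-1) ≤ 0 := by linarith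
        nlinarith
      obtain ⟨R, hR1, hR2⟩ := ((hT.eventually (eventually_ge_atTop 1)).and hEv).exists
      linarith
    · intro hlt
      have hc1pos : 0 < c1 := by rw [hc1def]; linarith
      have := (aux_add_atTop (hf0.const_mul_atTop hc1pos)
        (hg0.const_mul c2)).const_mul_atTop hk
      refine this.congr fun R => ?_
      rw [hV'eq R]
  -- Part 3
  have part3 : Tendsto V' (nhdsWithin 1 (Set.Ioo (0:ℝ) 1)) atBot ↔ (a + 1) * (Q + h) < 1 := by
    constructor
    · intro hT
      by_contra hcon
      push_neg at hcon
      have hc2ge : 0 ≤ c2 := by rw [hc2def]; linarith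
      have hc1pos : 0 < c1 := by rw [hc1def]; linarith
      have hEv : ∀ᶠ R in nhdsWithin (1:ℝ) (Set.Ioo 0 1), 0 ≤ V' R := by
        filter_upwards [self_mem_nhdsWithin] with R hR
        obtain ⟨p1, p2⟩ := hpos R hR
        rw [hV'eq R]
        have t1 : 0 ≤ c1 * R ^ (a-1) := mul_nonneg hc1pos.le p1.le
        have t2 : 0 ≤ c2 * (1 - R) ^ (a-1) := mul_nonneg hc2ge p2.le
        positivity
      obtain ⟨R, hR1, hR2⟩ := ((hT.eventually (eventually_le_atBot (-1))).and hEv).exists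
      linarith
    · intro hlt
      have hc2neg : c2 < 0 := by rw [hc2def]; linarith
      have hbot : Tendsto (fun R : ℝ => c2 * (1 - R) ^ (a-1))
          (nhdsWithin 1 (Set.Ioo (0:ℝ) 1)) atBot := by
        have := hg1.atTop_mul_const_of_neg hc2neg
        refine this.congr fun R => ?_
        ring
      have := (aux_add_atBot hbot (hf1.const_mul c1)).const_mul_atBot hk
      refine this.congr fun R => ?_
      rw [hV'eq R]
      ring_nf
  refine ⟨hderiv, part2, part3, ?_⟩
  -- Part 4
  rintro ⟨hlt1, hlt2⟩
  have hT0 : Tendsto V' (nhdsWithin 0 (Set.Ioo (0:ℝ) 1)) atTop := by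
    apply part2.mpr
    rw [div_lt_iff₀ ha1'] at hlt1
    nlinarith
  have hT1 : Tendsto V' (nhdsWithin 1 (Set.Ioo (0:ℝ) 1)) atBot := by
    apply part3.mpr
    rw [lt_div_iff₀ ha1'] at hlt2
    nlinarith
  -- continuity of V
  have hra : Continuous fun x : ℝ => x ^ a :=
    continuous_iff_continuousAt.2 fun x => Real.continuousAt_rpow_const x a (Or.inr ha0.le)
  have hrb : Continuous fun x : ℝ => (1 - x) ^ a := hra.comp (continuous_const.sub continuous_id)
  have hVc : Continuous V := by
    apply Continuous.sub
    · exact continuous_const.add (((continuous_const.mul (continuous_const.sub hra)).add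
        (continuous_const.mul hrb)).div_const _)
    · exact (((continuous_const.add (continuous_const.mul (continuous_const.sub hra))).add
        (continuous_const.mul hrb))).mul continuous_const
  obtain ⟨Rs, hRsmem, hmax⟩ := isCompact_Icc.exists_isMaxOn (nonempty_Icc.2 zero_le_one)
    hVc.continuousOn
  -- V' > 0 near 0
  have hev0 : {R : ℝ | 0 < V' R} ∈ nhdsWithin (0:ℝ) (Set.Ioi 0) := by
    rw [← hfil0]; exact hT0.eventually (eventually_gt_atTop 0)
  obtain ⟨u, hu, husub⟩ := mem_nhdsGT_iff_exists_Ioo_subset.1 hev0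
  set ε : ℝ := min u 1 / 2 with hεdef
  have hε0 : 0 < ε := by
    have : (0:ℝ) < min u 1 := lt_min hu one_pos
    positivity
  have hε1 : ε < 1 := by
    have h1 : min u 1 ≤ 1 := min_le_right _ _
    rw [hεdef]; linarith
  have hεu : ε < u := by
    have h1 : min u 1 ≤ u := min_le_left _ _
    have hu' : (0:ℝ) < u := hu
    rw [hεdef]; linarith
  have hmono : StrictMonoOn V (Set.Icc 0 ε) := by
    apply strictMonoOn_of_deriv_pos (convex_Icc _ _) hVc.continuousOn
    intro x hx
    rw [interior_Icc] at hx
    have hx1 : x ∈ Set.Ioo (0:ℝ) 1 := ⟨hx.1, hx.2.trans hε1⟩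
    rw [(hderiv x hx1).deriv]
    exact husub ⟨hx.1, hx.2.trans hεu⟩
  have hV0 : V 0 < V ε :=
    hmono (Set.left_mem_Icc.2 hε0.le) (Set.right_mem_Icc.2 hε0.le) hε0
  -- V' < 0 near 1
  have hev1 : {R : ℝ | V' R < 0} ∈ nhdsWithin (1:ℝ) (Set.Iio 1) := by
    rw [← hfil1]; exact hT1.eventually (eventually_lt_atBot 0)
  obtain ⟨l, hl, hlsub⟩ := mem_nhdsLT_iff_exists_Ioo_subset.1 hev1
  set m : ℝ := (max l 0 + 1) / 2 with hmdef
  have hmax0 : max l 0 < 1 := max_lt hl one_pos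
  have hm0 : 0 < m := by
    have : (0:ℝ) ≤ max l 0 := le_max_right _ _
    rw [hmdef]; linarith
  have hm1 : m < 1 := by rw [hmdef]; linarith
  have hml : l < m := by
    have : l ≤ max l 0 := le_max_left _ _
    rw [hmdef]; linarith
  have hanti : StrictAntiOn V (Set.Icc m 1) := by
    apply strictAntiOn_of_deriv_neg (convex_Icc _ _) hVc.continuousOn
    intro x hx
    rw [interior_Icc] at hx
    have hx1 : x ∈ Set.Ioo (0:ℝ) 1 := ⟨hm0.trans hx.1, hx.2⟩
    rw [(hderiv x hx1).deriv]
    exact hlsub ⟨hml.trans hx.1, hx.2⟩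
  have hV1 : V 1 < V m :=
    hanti (Set.left_mem_Icc.2 hm1.le) (Set.right_mem_Icc.2 hm1.le) hm1
  have hm' := isMaxOn_iff.1 hmax
  have hRs0 : Rs ≠ 0 := by
    rintro rfl
    have := hm' ε ⟨hε0.le, hε1.le⟩
    linarith
  have hRs1 : Rs ≠ 1 := by
    rintro rfl
    have := hm' m ⟨hm0.le, hm1.le⟩
    linarith
  exact ⟨Rs, ⟨lt_of_le_of_ne hRsmem.1 (Ne.symm hRs0), lt_of_le_of_ne hRsmem.2 hRs1⟩,
    fun R hR => hm' R ⟨hR.1.le, hR.2.le⟩⟩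
end

section
/- In the infinite-learning model with mixed recommendations, the type ĩ_∞ indifferent between buying the (necessarily controversial) product and the outside option satisfies: if λ ≠ 1, ĩ_∞ = ((σ-1)/(2(1+σ)))·((λ+1)/(λ-1)), where λ = q_1/q_2 and σ = q_H/q_L. In particular, if λ > 1 and σ ≥ λ then ĩ_∞ ≥ 1/2 (no type buys), and if λ > 1 and σ ≤ 1/λ then ĩ_∞ ≤ -1/2 (every type buys). -/
/-- The indifferent type under infinite learning with mixed recommendations. -/
theorem stmt_18 (Q lam σ : ℝ)
    (hQ : Q ∈ Set.Ioo (0:ℝ) (1/2)) (hlam : 0 < lam) (hσ : 0 < σ) (hne : lam ≠ 1) :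
    let q1 := 2*Q*lam / (lam + 1)
    let q2 := 2*Q / (lam + 1)
    let qH := (1 - 2*Q) * σ / (σ + 1)
    let itil := (σ - 1) / (2*(1 + σ)) * ((lam + 1) / (lam - 1))
    (1/2 + itil * (q1 - q2) / (q1 + q2)
      = qH + q1 * (1/2 + itil) + q2 * (1/2 - itil)) ∧
    (1 < lam → lam ≤ σ → 1/2 ≤ itil) ∧
    (1 < lam → σ ≤ 1/lam → itil ≤ -(1/2)) := by
  obtain ⟨hQ0, hQ1⟩ := hQ
  have hl1 : lam + 1 ≠ 0 := by positivity
  have hs1 : (1:ℝ) + σ ≠ 0 := by positivity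
  have hs1' : σ + 1 ≠ 0 := by positivity
  have hlm : lam - 1 ≠ 0 := sub_ne_zero.mpr hne
  have hQne : Q ≠ 0 := ne_of_gt hQ0
  refine ⟨?_, ?_, ?_⟩
  · field_simp
    ring
  · intro h1 h2
    have hlm0 : 0 < lam - 1 := by linarith
    rw [div_mul_div_comm, le_div_iff₀ (by positivity)]
    nlinarith
  · intro h1 h2
    have hlm0 : 0 < lam - 1 := by linarith
    have hsl : σ * lam ≤ 1 := (le_div_iff₀ hlam).mp h2
    rw [div_mul_div_comm, div_le_iff₀ (by positivity)]
    nlinarith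
end
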